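/- arXiv:0801.3373 — 2 statements merged into one kernel-verified Lean document; each statement's English description precedes it below -/
import Mathlib

section
/- Let P = (x_1,...,x_{n-1}) in R = K[x_1,...,x_n] and let d ≤ t be positive integers. Then the integral closure of (x_1^d, ..., x_{n-1}^d, x_n^t) equals L(P,a) = Σ_{i=0}^d P^{d-i}·x_n^{a_i} where a_i = ⌈it/d⌉ for i = 0,...,d. -/
open MvPolynomial

noncomputable section

/-- The prime ideal `P = (x_1,…,x_{n-1})` in `R = K[x_1,…,x_n]` with `n = m+1`. -/
def Pid (K : Type) [Field K] (m : ℕ) : Ideal (MvPolynomial (Fin (m + 1)) K) :=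
  Ideal.span {f | ∃ i : Fin (m + 1), i ≠ Fin.last m ∧ f = X i}

/-- `L(P,a) = Σ_{i=0}^d P^{d-i}·x_n^{a_i}` for a sequence `a`. -/
def Lideal (K : Type) [Field K] (m : ℕ) (d : ℕ) (a : ℕ → ℕ) :
    Ideal (MvPolynomial (Fin (m + 1)) K) :=
  ∑ i ∈ Finset.range (d + 1), Pid K m ^ (d - i) * Ideal.span {X (Fin.last m) ^ a i}

/-- The integral closure of an ideal, as a set: elements satisfying an equation
`a^t + r_1 a^{t-1} + … + r_t = 0` with `r_i ∈ I^i`. -/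
def intClo {A : Type} [CommRing A] (I : Ideal A) : Set A :=
  {a | ∃ (t : ℕ) (r : ℕ → A), 0 < t ∧ (∀ i, 1 ≤ i → i ≤ t → r i ∈ I ^ i) ∧
    a ^ t + ∑ i ∈ Finset.Icc 1 t, r i * a ^ (t - i) = 0}

/-- `I` is integrally closed. -/
def IsIC {A : Type} [CommRing A] (I : Ideal A) : Prop :=
  ∀ a ∈ intClo I, a ∈ I

/-- Product of a sequence of length `dl+1` with one of length `el+1`:
`(ab)_j = min { a_r + b_s : r + s = j }`. -/
def seqMul (dl el : ℕ) (a b : ℕ → ℕ) : ℕ → ℕ := fun j =>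
  sInf {v | ∃ r s : ℕ, r + s = j ∧ r ≤ dl ∧ s ≤ el ∧ v = a r + b s}

/-- `seqPow dl a k` is the `(k+1)`-fold product `a^{(k+1)}` of the sequence `a`
(of length `dl+1`) with itself. -/
def seqPow (dl : ℕ) (a : ℕ → ℕ) : ℕ → (ℕ → ℕ)
  | 0 => a
  | k + 1 => seqMul dl ((k + 1) * dl) a (seqPow dl a k)

/-- `a'_j = min { ⌈(a^{(k)})_{kj}/k⌉ : k > 0 }` (here `k+1` runs over positive integers,
and `⌈x/(k+1)⌉ = (x + k)/(k+1)` in natural division). -/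
def seqIC (dl : ℕ) (a : ℕ → ℕ) : ℕ → ℕ := fun j =>
  sInf {v | ∃ k : ℕ, v = (seqPow dl a k ((k + 1) * j) + k) / (k + 1)}


namespace Stmt17Aux

/-- weight of a monomial exponent: `t` on the first `m` variables, `d` on the last -/
def wt (m d t : ℕ) (a : Fin (m+1) →₀ ℕ) : ℕ :=
  ∑ j, (if j = Fin.last m then d else t) * a j

lemma wt_add (m d t : ℕ) (a b : Fin (m+1) →₀ ℕ) :
    wt m d t (a + b) = wt m d t a + wt m d t b := by
  simp [wt, Finsupp.add_apply, mul_add, Finset.sum_add_distrib]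

lemma wt_single (m d t : ℕ) (j : Fin (m+1)) (n : ℕ) :
    wt m d t (Finsupp.single j n) = (if j = Fin.last m then d else t) * n := by
  rw [wt, Finset.sum_eq_single j]
  · rw [Finsupp.single_eq_same]
  · intro b _ hb; rw [Finsupp.single_eq_of_ne' (Ne.symm hb), mul_zero]
  · intro h; exact absurd (Finset.mem_univ j) h

lemma wt_nsmul (m d t : ℕ) (n : ℕ) (a : Fin (m+1) →₀ ℕ) :
    wt m d t (n • a) = n * wt m d t a := by
  induction n with
  | zero => simp [wt]
  | succ k ih => rw [succ_nsmul, wt_add, ih, Nat.succ_mul]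

variable (K : Type) [Field K]

/-- the ideal of polynomials all of whose monomials have weight at least `c` -/
def Wid (m d t c : ℕ) : Ideal (MvPolynomial (Fin (m+1)) K) where
  carrier := {f | ∀ a ∈ f.support, c ≤ wt m d t a}
  zero_mem' := by intro a ha; simp at ha
  add_mem' := by
    intro x y hx hy a ha
    rcases Finset.mem_union.mp (MvPolynomial.support_add ha) with h | h
    · exact hx a h
    · exact hy a h
  smul_mem' := by
    intro r x hx a ha
    rw [smul_eq_mul] at ha
    obtain ⟨u, hu, v, hv, rfl⟩ := Finset.mem_add.mp (MvPolynomial.support_mul _ _ ha)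
    rw [wt_add]
    exact (hx v hv).trans (Nat.le_add_left _ _)

variable {K}

lemma mem_Wid {m d t c : ℕ} {f : MvPolynomial (Fin (m+1)) K} :
    f ∈ Wid K m d t c ↔ ∀ a ∈ f.support, c ≤ wt m d t a := Iff.rfl

lemma Wid_anti {m d t c c' : ℕ} (h : c' ≤ c) : Wid K m d t c ≤ Wid K m d t c' :=
  fun _ hf a ha => le_trans h (hf a ha)

lemma mul_mem_Wid {m d t c1 c2 : ℕ} {f g : MvPolynomial (Fin (m+1)) K}
    (hf : f ∈ Wid K m d t c1) (hg : g ∈ Wid K m d t c2) :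
    f * g ∈ Wid K m d t (c1 + c2) := by
  apply mem_Wid.mpr
  intro a ha
  obtain ⟨u, hu, v, hv, rfl⟩ := Finset.mem_add.mp (MvPolynomial.support_mul _ _ ha)
  rw [wt_add]
  exact add_le_add (mem_Wid.mp hf u hu) (mem_Wid.mp hg v hv)

lemma pow_mem_Wid {m d t c : ℕ} {f : MvPolynomial (Fin (m+1)) K}
    (hf : f ∈ Wid K m d t c) : ∀ n, f ^ n ∈ Wid K m d t (n * c)
  | 0 => by
    apply mem_Wid.mpr; intro a _; simp
  | n+1 => by
    rw [pow_succ, Nat.succ_mul]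
    exact mul_mem_Wid (pow_mem_Wid hf n) hf

lemma monomial_mem_Wid {m d t c : ℕ} (a : Fin (m+1) →₀ ℕ) (r : K)
    (h : c ≤ wt m d t a) :
    (monomial a r : MvPolynomial (Fin (m+1)) K) ∈ Wid K m d t c := by
  classical
  apply mem_Wid.mpr; intro u hu
  rw [MvPolynomial.support_monomial] at hu
  split_ifs at hu
  · simp at hu
  · rw [Finset.mem_singleton.mp hu]; exact h

lemma pow_le_Wid {m d t c : ℕ} {J : Ideal (MvPolynomial (Fin (m+1)) K)}
    (h : J ≤ Wid K m d t c) : ∀ k, J ^ k ≤ Wid K m d t (k * c)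
  | 0 => by
    rw [pow_zero, Ideal.one_eq_top]
    exact fun f _ => mem_Wid.mpr fun a _ => by simp
  | k+1 => by
    rw [pow_succ, Nat.succ_mul]
    exact le_trans (Ideal.mul_mono (pow_le_Wid h k) h)
      (Ideal.mul_le.mpr fun r hr s hs => mul_mem_Wid hr hs)


lemma le_mul_ceil (x d : ℕ) (hd : 0 < d) : x ≤ d * ((x + d - 1) / d) := by
  rcases Nat.eq_zero_or_pos x with rfl | hx
  · simp
  · have hxd : x + d - 1 = (x - 1) + 1 * d := by omega
    rw [hxd, Nat.add_mul_div_right _ _ hd, Nat.mul_add, Nat.mul_one]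
    have h1 := Nat.div_add_mod (x - 1) d
    have h2 := Nat.mod_lt (x - 1) hd
    generalize hC : d * ((x - 1) / d) = C at h1 ⊢
    generalize hr : (x - 1) % d = r at h1 h2
    omega

lemma ceil_le_of_mul_le {x d A : ℕ} (hd : 0 < d) (h : x ≤ d * A) : (x + d - 1) / d ≤ A := by
  rw [Nat.div_le_iff_le_mul_add_pred hd]
  generalize hC : d * A = C at h ⊢
  omega

abbrev fdeg (m : ℕ) (a : Fin (m+1) →₀ ℕ) : ℕ := ∑ j ∈ Finset.univ.erase (Fin.last m), a j

lemma fdeg_add (m : ℕ) (u v : Fin (m+1) →₀ ℕ) : fdeg m (u + v) = fdeg m u + fdeg m v := by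
  simp [fdeg, Finsupp.add_apply, Finset.sum_add_distrib]

lemma fdeg_single (m : ℕ) (j : Fin (m+1)) (n : ℕ) (hj : j ≠ Fin.last m) :
    fdeg m (Finsupp.single j n) = n := by
  rw [fdeg, Finset.sum_eq_single_of_mem j (Finset.mem_erase.mpr ⟨hj, Finset.mem_univ j⟩)]
  · exact Finsupp.single_eq_same
  · intro b _ hb; exact Finsupp.single_eq_of_ne' (Ne.symm hb)

lemma wt_eq (m d t : ℕ) (a : Fin (m+1) →₀ ℕ) :
    wt m d t a = t * fdeg m a + d * a (Fin.last m) := by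
  rw [wt, ← Finset.sum_erase_add _ _ (Finset.mem_univ (Fin.last m))]
  congr 1
  · rw [Finset.mul_sum]
    apply Finset.sum_congr rfl
    intro j hj
    rw [if_neg (Finset.ne_of_mem_erase hj)]
  · rw [if_pos rfl]


/-- weight-then-lex order key -/
def kap (m d t : ℕ) (a : Fin (m+1) →₀ ℕ) : Lex (ℕ × Lex (Fin (m+1) →₀ ℕ)) :=
  toLex (wt m d t a, toLex a)

lemma kap_wt_le {m d t : ℕ} {a b : Fin (m+1) →₀ ℕ}
    (h : kap m d t a ≤ kap m d t b) : wt m d t a ≤ wt m d t b := by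
  rw [kap, kap] at h
  rcases Prod.Lex.le_iff.mp h with h | ⟨h, _⟩
  · exact le_of_lt h
  · exact le_of_eq h

lemma min_mul {m d t : ℕ} {f g : MvPolynomial (Fin (m+1)) K} {a b : Fin (m+1) →₀ ℕ}
    (ha : a ∈ f.support) (hfa : ∀ u ∈ f.support, kap m d t a ≤ kap m d t u)
    (hb : b ∈ g.support) (hgb : ∀ u ∈ g.support, kap m d t b ≤ kap m d t u) :
    coeff (a + b) (f * g) = coeff a f * coeff b g ∧
      ∀ u ∈ (f * g).support, kap m d t (a + b) ≤ kap m d t u := by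
  classical
  have key : ∀ u v, u ∈ f.support → v ∈ g.support → u + v = a + b → u = a ∧ v = b := by
    intro u v hu hv huv
    have h1 := hfa u hu
    have h2 := hgb v hv
    have hw : wt m d t u + wt m d t v = wt m d t a + wt m d t b := by
      rw [← wt_add, ← wt_add, huv]
    have hw1 : wt m d t a ≤ wt m d t u := kap_wt_le h1
    have hw2 : wt m d t b ≤ wt m d t v := kap_wt_le h2
    have hwu : wt m d t u = wt m d t a := by omega
    have hwv : wt m d t v = wt m d t b := by omega
    rw [kap, kap] at h1 h2
    rcases Prod.Lex.le_iff.mp h1 with h1' | ⟨_, h1'⟩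
    · exact absurd hwu (by simp at h1' ⊢; omega)
    rcases Prod.Lex.le_iff.mp h2 with h2' | ⟨_, h2'⟩
    · exact absurd hwv (by simp at h2' ⊢; omega)
    have hueq : u = a := by
      by_contra hne
      have hlt : toLex a < toLex u :=
        lt_of_le_of_ne h1' fun e => hne ((toLex_inj.mp e).symm)
      have hq : toLex a + toLex b < toLex u + toLex v :=
        add_lt_add_of_lt_of_le hlt h2'
      have heq : toLex u + toLex v = toLex a + toLex b := by
        show toLex (u + v) = toLex (a + b); rw [huv]
      rw [heq] at hq
      exact lt_irrefl _ hq
    refine ⟨hueq, ?_⟩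
    rw [hueq] at huv
    exact add_left_cancel huv
  constructor
  · rw [MvPolynomial.coeff_mul]
    apply Finset.sum_eq_single_of_mem (a, b) (Finset.HasAntidiagonal.mem_antidiagonal.mpr rfl)
    intro uv huv hne
    by_contra hne0
    have hu : uv.1 ∈ f.support :=
      MvPolynomial.mem_support_iff.mpr fun h => hne0 (by rw [h, zero_mul])
    have hv : uv.2 ∈ g.support :=
      MvPolynomial.mem_support_iff.mpr fun h => hne0 (by rw [h, mul_zero])
    obtain ⟨e1, e2⟩ := key uv.1 uv.2 hu hv (Finset.HasAntidiagonal.mem_antidiagonal.mp huv)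
    exact hne (Prod.ext e1 e2)
  · intro u' hu'
    obtain ⟨u, hu, v, hv, rfl⟩ := Finset.mem_add.mp (MvPolynomial.support_mul _ _ hu')
    have h1 := hfa u hu
    have h2 := hgb v hv
    have hw1 : wt m d t a ≤ wt m d t u := kap_wt_le h1
    have hw2 : wt m d t b ≤ wt m d t v := kap_wt_le h2
    rw [kap, kap]
    rcases Nat.lt_or_ge (wt m d t a + wt m d t b) (wt m d t u + wt m d t v) with hlt | hge
    · apply Prod.Lex.le_iff.mpr
      left
      simpa [wt_add] using hlt
    · have he1 : wt m d t u = wt m d t a := by omega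
      have he2 : wt m d t v = wt m d t b := by omega
      apply Prod.Lex.le_iff.mpr
      right
      constructor
      · simp only [wt_add, ofLex_toLex]; omega
      · rw [kap, kap] at h1 h2
        rcases Prod.Lex.le_iff.mp h1 with h1' | ⟨_, h1'⟩
        · simp at h1'; omega
        rcases Prod.Lex.le_iff.mp h2 with h2' | ⟨_, h2'⟩
        · simp at h2'; omega
        show toLex (a + b) ≤ toLex (u + v)
        exact add_le_add h1' h2'

lemma min_pow {m d t : ℕ} {f : MvPolynomial (Fin (m+1)) K} {a : Fin (m+1) →₀ ℕ}
    (ha : a ∈ f.support) (hfa : ∀ u ∈ f.support, kap m d t a ≤ kap m d t u) :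
    ∀ N : ℕ, coeff (N • a) (f ^ N) = (coeff a f) ^ N ∧
      ∀ u ∈ (f ^ N).support, kap m d t (N • a) ≤ kap m d t u := by
  intro N
  induction N with
  | zero =>
    constructor
    · simp
    · intro u hu
      rw [pow_zero] at hu
      have h1 : (1 : MvPolynomial (Fin (m+1)) K) = monomial 0 1 := by
        rw [MvPolynomial.monomial_zero', MvPolynomial.C_1]
      classical
      rw [h1, MvPolynomial.support_monomial, if_neg one_ne_zero] at hu
      rw [Finset.mem_singleton.mp hu, zero_smul]
  | succ N ih =>
    have hfN : N • a ∈ (f ^ N).support := MvPolynomial.mem_support_iff.mpr (by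
      rw [ih.1]
      exact pow_ne_zero _ (MvPolynomial.mem_support_iff.mp ha))
    obtain ⟨hc, hm⟩ := min_mul ha hfa hfN ih.2
    constructor
    · rw [pow_succ', succ_nsmul', hc, ih.1, pow_succ']
    · rw [pow_succ', succ_nsmul']
      exact hm


def Iid (K : Type) [Field K] (m d t : ℕ) : Ideal (MvPolynomial (Fin (m+1)) K) :=
  Ideal.span ({f | ∃ i : Fin (m + 1), i ≠ Fin.last m ∧ f = X i ^ d} ∪ {X (Fin.last m) ^ t})

lemma Iid_le_Wid (m d t : ℕ) : Iid K m d t ≤ Wid K m d t (t * d) := by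
  rw [Iid, Ideal.span_le]
  rintro g (⟨i, hi, rfl⟩ | hg)
  · rw [SetLike.mem_coe, X_pow_eq_monomial]
    apply monomial_mem_Wid
    rw [wt_single, if_neg hi]
  · rw [Set.mem_singleton_iff.mp hg, SetLike.mem_coe, X_pow_eq_monomial]
    apply monomial_mem_Wid
    rw [wt_single, if_pos rfl, Nat.mul_comm]

lemma Iid_pow_le (m d t : ℕ) (i : ℕ) : Iid K m d t ^ i ≤ Wid K m d t (i * (t * d)) :=
  pow_le_Wid (Iid_le_Wid m d t) i

lemma Pid_le_Wid (m d t : ℕ) : Pid K m ≤ Wid K m d t t := by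
  rw [Pid, Ideal.span_le]
  rintro g ⟨i, hi, rfl⟩
  rw [SetLike.mem_coe, ← pow_one (X i : MvPolynomial (Fin (m+1)) K), X_pow_eq_monomial]
  apply monomial_mem_Wid
  rw [wt_single, if_neg hi, mul_one]

lemma ylast_span_le (m d t c : ℕ) :
    Ideal.span {(X (Fin.last m) ^ c : MvPolynomial (Fin (m+1)) K)} ≤ Wid K m d t (d * c) := by
  rw [Ideal.span_le, Set.singleton_subset_iff, SetLike.mem_coe, X_pow_eq_monomial]
  apply monomial_mem_Wid
  rw [wt_single, if_pos rfl]

lemma intClo_mem_Wid {m d t : ℕ} {f : MvPolynomial (Fin (m+1)) K}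
    (hf : f ∈ intClo (Iid K m d t)) : f ∈ Wid K m d t (t * d) := by
  classical
  obtain ⟨N, r, hN, hr, heq⟩ := hf
  by_cases hf0 : f = 0
  · rw [hf0]; exact (Wid K m d t (t * d)).zero_mem
  obtain ⟨a, ha, hmin⟩ := Finset.exists_min_image f.support (kap m d t)
    (Finset.nonempty_iff_ne_empty.mpr (mt MvPolynomial.support_eq_empty.mp hf0))
  apply mem_Wid.mpr
  suffices hta : t * d ≤ wt m d t a by
    intro u hu; exact le_trans hta (kap_wt_le (hmin u hu))
  by_contra hlt
  push_neg at hlt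
  have hfW : f ∈ Wid K m d t (wt m d t a) := mem_Wid.mpr fun u hu => kap_wt_le (hmin u hu)
  have hS : (∑ i ∈ Finset.Icc 1 N, r i * f ^ (N - i)) ∈ Wid K m d t (N * wt m d t a + 1) := by
    apply Ideal.sum_mem
    intro i hi
    obtain ⟨hi1, hi2⟩ := Finset.mem_Icc.mp hi
    have h1 : r i ∈ Wid K m d t (i * (t * d)) := Iid_pow_le m d t i (hr i hi1 hi2)
    have h2 : f ^ (N - i) ∈ Wid K m d t ((N - i) * wt m d t a) := pow_mem_Wid hfW (N - i)
    apply Wid_anti ?_ (mul_mem_Wid h1 h2)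
    have e1 : i * (wt m d t a + 1) ≤ i * (t * d) := Nat.mul_le_mul_left i (by omega)
    have e2 : i * (wt m d t a + 1) = i * wt m d t a + i := by ring
    have e3 : i * wt m d t a + (N - i) * wt m d t a = N * wt m d t a := by
      rw [← Nat.add_mul, Nat.add_sub_cancel' hi2]
    linarith
  have hfN : f ^ N ∈ Wid K m d t (N * wt m d t a + 1) := by
    have hneg : f ^ N = -(∑ i ∈ Finset.Icc 1 N, r i * f ^ (N - i)) :=
      eq_neg_of_add_eq_zero_left heq
    rw [hneg]; exact neg_mem hS
  have hmem : N • a ∈ (f ^ N).support := MvPolynomial.mem_support_iff.mpr (by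
    rw [(min_pow ha hmin N).1]
    exact pow_ne_zero _ (MvPolynomial.mem_support_iff.mp ha))
  have hcon := mem_Wid.mp hfN _ hmem
  rw [wt_nsmul] at hcon
  exact absurd hcon (Nat.not_succ_le_self _)


lemma mono_mem {m : ℕ} : ∀ (k c : ℕ) (a : Fin (m+1) →₀ ℕ), k ≤ fdeg m a → c ≤ a (Fin.last m) →
    (monomial a 1 : MvPolynomial (Fin (m+1)) K) ∈
      Pid K m ^ k * Ideal.span {X (Fin.last m) ^ c}
  | 0, c, a, _, hc => by
    rw [pow_zero, Ideal.one_eq_top, Ideal.top_mul, Ideal.mem_span_singleton]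
    refine ⟨monomial (a - Finsupp.single (Fin.last m) c) 1, ?_⟩
    rw [X_pow_eq_monomial, monomial_mul, one_mul,
      add_tsub_cancel_of_le (Finsupp.single_le_iff.mpr hc)]
  | k+1, c, a, hk, hc => by
    have hpos : fdeg m a ≠ 0 := by omega
    obtain ⟨j, hj1, hj2⟩ := Finset.exists_ne_zero_of_sum_ne_zero hpos
    have hjne : j ≠ Fin.last m := Finset.ne_of_mem_erase hj1
    have hle : Finsupp.single j 1 ≤ a := Finsupp.single_le_iff.mpr (Nat.one_le_iff_ne_zero.mpr hj2)
    have hdec : Finsupp.single j 1 + (a - Finsupp.single j 1) = a := add_tsub_cancel_of_le hle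
    have hfd : fdeg m a = 1 + fdeg m (a - Finsupp.single j 1) := by
      conv_lhs => rw [← hdec]
      rw [fdeg_add, fdeg_single m j 1 hjne]
    have hlast : ((a - Finsupp.single j 1 : Fin (m+1) →₀ ℕ)) (Fin.last m) = a (Fin.last m) := by
      rw [Finsupp.tsub_apply, Finsupp.single_eq_of_ne' hjne, Nat.sub_zero]
    have ih := mono_mem k c (a - Finsupp.single j 1) (by omega) (by rw [hlast]; exact hc)
    have hX : (X j : MvPolynomial (Fin (m+1)) K) ∈ Pid K m :=
      Ideal.subset_span ⟨j, hjne, rfl⟩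
    have hmono : (monomial a 1 : MvPolynomial (Fin (m+1)) K) =
        X j * monomial (a - Finsupp.single j 1) 1 := by
      rw [← pow_one (X j : MvPolynomial (Fin (m+1)) K), X_pow_eq_monomial, monomial_mul,
        one_mul, hdec]
    rw [hmono, pow_succ', mul_assoc]
    exact Ideal.mul_mem_mul hX ih

lemma Lideal_le_Wid (m d t : ℕ) (hd : 0 < d) :
    Lideal K m d (fun i => (i * t + d - 1) / d) ≤ Wid K m d t (t * d) := by
  rw [Lideal]
  apply Finset.sum_induction _ (fun J => J ≤ Wid K m d t (t * d))
  · intro a b ha hb; rw [Submodule.add_eq_sup]; exact sup_le ha hb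
  · rw [Ideal.zero_eq_bot]; exact bot_le
  · intro i hi
    refine le_trans (Ideal.mul_mono (pow_le_Wid (Pid_le_Wid m d t) _)
      (ylast_span_le m d t _)) ?_
    refine le_trans (Ideal.mul_le.mpr fun r hr s hs => mul_mem_Wid hr hs) (Wid_anti ?_)
    have h1 : i * t ≤ d * ((i * t + d - 1) / d) := le_mul_ceil (i * t) d hd
    have hi' : i ≤ d := by have := Finset.mem_range.mp hi; omega
    have e : (d - i) * t + i * t = d * t := by rw [← Nat.add_mul, Nat.sub_add_cancel hi']
    have e2 : t * d = d * t := Nat.mul_comm t d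
    linarith

lemma Wid_le_Lideal (m d t : ℕ) (hd : 0 < d) :
    Wid K m d t (t * d) ≤ Lideal K m d (fun i => (i * t + d - 1) / d) := by
  intro f hf
  nth_rewrite 1 [f.as_sum]
  apply Ideal.sum_mem
  intro a ha
  have hws : t * d ≤ wt m d t a := mem_Wid.mp hf a ha
  have hir : d - min d (fdeg m a) ∈ Finset.range (d + 1) := Finset.mem_range.mpr (by omega)
  have hterm : Pid K m ^ (d - (d - min d (fdeg m a))) *
      Ideal.span {X (Fin.last m) ^ (((d - min d (fdeg m a)) * t + d - 1) / d)} ≤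
      Lideal K m d (fun i => (i * t + d - 1) / d) := by
    rw [Lideal, ← Finset.sum_erase_add _ _ hir, Submodule.add_eq_sup]
    exact le_sup_right
  have hlast : ((d - min d (fdeg m a)) * t + d - 1) / d ≤ a (Fin.last m) := by
    rcases Nat.lt_or_ge (fdeg m a) d with hFd | hFd
    · have h1 : t * d ≤ t * fdeg m a + d * a (Fin.last m) := by
        rw [← wt_eq]; exact hws
      have e : (d - min d (fdeg m a)) * t + fdeg m a * t = d * t := by
        rw [← Nat.add_mul]; congr 1; omega
      have h2 : (d - min d (fdeg m a)) * t ≤ d * a (Fin.last m) := by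
        have e2 : t * fdeg m a = fdeg m a * t := Nat.mul_comm _ _
        have e3 : t * d = d * t := Nat.mul_comm _ _
        linarith
      exact ceil_le_of_mul_le hd h2
    · have hz : d - min d (fdeg m a) = 0 := by omega
      rw [hz, Nat.zero_mul, Nat.zero_add, Nat.div_eq_of_lt (by omega)]
      exact Nat.zero_le _
  have hrw : (monomial a (coeff a f) : MvPolynomial (Fin (m+1)) K) =
      C (coeff a f) * monomial a 1 := by rw [C_mul_monomial, mul_one]
  rw [hrw]
  exact hterm (Ideal.mul_mem_left _ _ (mono_mem _ _ a (by omega) hlast))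


lemma Wid_step_le (m d t : ℕ) (hd : 0 < d) (hdt : d ≤ t) :
    Wid K m d t ((m + 1) * (t * d)) ≤ Iid K m d t * Wid K m d t (m * (t * d)) := by
  intro f hf
  nth_rewrite 1 [f.as_sum]
  apply Ideal.sum_mem
  intro a ha
  have ht : 0 < t := lt_of_lt_of_le hd hdt
  have hwa : (m + 1) * (t * d) ≤ wt m d t a := mem_Wid.mp hf a ha
  have hcase : (∃ j, j ≠ Fin.last m ∧ d ≤ a j) ∨ t ≤ a (Fin.last m) := by
    by_contra hcon
    push_neg at hcon
    obtain ⟨h1, h2⟩ := hcon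
    have hF : fdeg m a ≤ m * (d - 1) := by
      have hb : ∀ j ∈ Finset.univ.erase (Fin.last m), a j ≤ d - 1 := by
        intro j hj
        have := h1 j (Finset.ne_of_mem_erase hj)
        omega
      have := Finset.sum_le_card_nsmul _ _ _ hb
      rwa [smul_eq_mul, Finset.card_erase_of_mem (Finset.mem_univ _), Finset.card_univ,
        Fintype.card_fin, Nat.add_sub_cancel] at this
    have hwa2 : wt m d t a ≤ t * (m * (d - 1)) + d * (t - 1) := by
      rw [wt_eq]
      exact Nat.add_le_add (Nat.mul_le_mul_left t hF) (Nat.mul_le_mul_left d (by omega))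
    have c1 : t * (m * (d - 1)) + t * m = t * (m * d) := by
      rw [← Nat.mul_add]; congr 1
      rw [← Nat.mul_succ]; congr 1; omega
    have c2 : d * (t - 1) + d = d * t := by rw [← Nat.mul_succ]; congr 1; omega
    have c3 : (m + 1) * (t * d) = m * (t * d) + t * d := Nat.succ_mul m (t * d)
    have c4 : t * (m * d) = m * (t * d) := by ring
    have c5 : d * t = t * d := Nat.mul_comm d t
    generalize hI : (m + 1) * (t * d) = I at hwa c3
    generalize hA : t * (m * (d - 1)) = A at hwa2 c1
    generalize hB : d * (t - 1) = B at hwa2 c2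
    generalize hD : t * (m * d) = D' at c1 c4
    generalize hE : m * (t * d) = E' at c3 c4
    generalize hC : t * m = C' at c1
    generalize hG : d * t = G' at c2 c5
    generalize hF : t * d = F' at c3 c5
    generalize hH : wt m d t a = H' at hwa hwa2
    omega
  rcases hcase with ⟨j, hj, hja⟩ | hlrg
  · have hle : Finsupp.single j d ≤ a := Finsupp.single_le_iff.mpr hja
    have hdec : Finsupp.single j d + (a - Finsupp.single j d) = a := add_tsub_cancel_of_le hle
    have hmono : (monomial a (coeff a f) : MvPolynomial (Fin (m+1)) K) =
        (X j ^ d) * monomial (a - Finsupp.single j d) (coeff a f) := by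
      rw [X_pow_eq_monomial, monomial_mul, one_mul, hdec]
    rw [hmono]
    apply Ideal.mul_mem_mul
    · exact Ideal.subset_span (Or.inl ⟨j, hj, rfl⟩)
    · apply monomial_mem_Wid
      have hq := congrArg (wt m d t) hdec
      rw [wt_add, wt_single, if_neg hj] at hq
      have c3 : (m + 1) * (t * d) = m * (t * d) + t * d := Nat.succ_mul m (t * d)
      omega
  · have hle : Finsupp.single (Fin.last m) t ≤ a := Finsupp.single_le_iff.mpr hlrg
    have hdec : Finsupp.single (Fin.last m) t + (a - Finsupp.single (Fin.last m) t) = a :=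
      add_tsub_cancel_of_le hle
    have hmono : (monomial a (coeff a f) : MvPolynomial (Fin (m+1)) K) =
        (X (Fin.last m) ^ t) * monomial (a - Finsupp.single (Fin.last m) t) (coeff a f) := by
      rw [X_pow_eq_monomial, monomial_mul, one_mul, hdec]
    rw [hmono]
    apply Ideal.mul_mem_mul
    · exact Ideal.subset_span (Or.inr rfl)
    · apply monomial_mem_Wid
      have hq := congrArg (wt m d t) hdec
      rw [wt_add, wt_single, if_pos rfl] at hq
      have c3 : (m + 1) * (t * d) = m * (t * d) + t * d := Nat.succ_mul m (t * d)
      have c5 : d * t = t * d := Nat.mul_comm d t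
      omega

lemma exists_smul_rep {m : ℕ} {J N : Ideal (MvPolynomial (Fin (m+1)) K)}
    {y : MvPolynomial (Fin (m+1)) K} (hy : y ∈ J * N) :
    ∃ z : ↥N, (z : MvPolynomial (Fin (m+1)) K) = y ∧
      z ∈ J • (⊤ : Submodule (MvPolynomial (Fin (m+1)) K) ↥N) := by
  refine Submodule.mul_induction_on hy ?_ ?_
  · intro r hr n hn
    refine ⟨r • ⟨n, hn⟩, ?_, Submodule.smul_mem_smul hr Submodule.mem_top⟩
    simp [smul_eq_mul]
  · rintro x y ⟨zx, hx1, hx2⟩ ⟨zy, hy1, hy2⟩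
    exact ⟨zx + zy, by simp [hx1, hy1], Submodule.add_mem _ hx2 hy2⟩

lemma Wid_mem_intClo {m d t : ℕ} (hd : 0 < d) (hdt : d ≤ t)
    {f : MvPolynomial (Fin (m+1)) K} (hf : f ∈ Wid K m d t (t * d)) :
    f ∈ intClo (Iid K m d t) := by
  classical
  set Jm : Ideal (MvPolynomial (Fin (m+1)) K) := Wid K m d t (m * (t * d)) with hJm
  haveI hfin : Module.Finite (MvPolynomial (Fin (m+1)) K) ↥Jm :=
    Module.Finite.iff_fg.mpr (IsNoetherian.noetherian Jm)
  have hmaps : ∀ x ∈ Jm, (LinearMap.lsmul (MvPolynomial (Fin (m+1)) K)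
      (MvPolynomial (Fin (m+1)) K) f) x ∈ Jm := by
    intro x hx
    rw [LinearMap.lsmul_apply, smul_eq_mul]
    exact Wid_anti (Nat.le_add_left _ _) (mul_mem_Wid hf hx)
  set φ : Module.End (MvPolynomial (Fin (m+1)) K) ↥Jm :=
    (LinearMap.lsmul _ _ f).restrict hmaps with hφ
  have hφval : ∀ x : ↥Jm, ((φ x : ↥Jm) : MvPolynomial (Fin (m+1)) K) = f * ↑x := by
    intro x
    simp [hφ, LinearMap.restrict_apply, LinearMap.lsmul_apply, smul_eq_mul]
  have hrange : LinearMap.range φ ≤ Iid K m d t • (⊤ : Submodule _ ↥Jm) := by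
    rintro y ⟨x, rfl⟩
    have hfx : f * ↑x ∈ Iid K m d t * Jm := by
      apply Wid_step_le m d t hd hdt
      have h1 : f * ↑x ∈ Wid K m d t (t * d + m * (t * d)) := mul_mem_Wid hf x.2
      exact Wid_anti (le_of_eq (by rw [Nat.succ_mul, Nat.add_comm])) h1
    obtain ⟨z, hz1, hz2⟩ := exists_smul_rep hfx
    have hzz : φ x = z := Subtype.ext (by rw [hφval x, hz1])
    rw [hzz]; exact hz2
  obtain ⟨p, hmon, -, hco, hev⟩ :=
    LinearMap.exists_monic_and_coeff_mem_pow_and_aeval_eq_zero_of_range_le_smul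
      (MvPolynomial (Fin (m+1)) K) φ (Iid K m d t) hrange
  have hzmem : (X (Fin.last m) ^ (m * t) : MvPolynomial (Fin (m+1)) K) ∈ Jm := by
    rw [hJm, X_pow_eq_monomial]
    apply monomial_mem_Wid
    rw [wt_single, if_pos rfl]
    exact le_of_eq (by ring)
  set z : ↥Jm := ⟨X (Fin.last m) ^ (m * t), hzmem⟩ with hzdef
  have hpow : ∀ (n : ℕ) (x : ↥Jm),
      (((φ ^ n) x : ↥Jm) : MvPolynomial (Fin (m+1)) K) = f ^ n * ↑x := by
    intro n
    induction n with
    | zero => intro x; simp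
    | succ k ih =>
      intro x
      rw [pow_succ, Module.End.mul_apply, ih (φ x), hφval x, pow_succ]
      ring
  have h0 : (((Polynomial.aeval φ p) z : ↥Jm) : MvPolynomial (Fin (m+1)) K) = 0 := by
    rw [hev]; rfl
  rw [Polynomial.aeval_eq_sum_range] at h0
  have h1 : (((∑ i ∈ Finset.range (p.natDegree + 1), p.coeff i • φ ^ i) z : ↥Jm) :
      MvPolynomial (Fin (m+1)) K) =
      ∑ i ∈ Finset.range (p.natDegree + 1),
        p.coeff i * (f ^ i * (X (Fin.last m) ^ (m * t))) := by
    rw [LinearMap.sum_apply, AddSubmonoidClass.coe_finset_sum]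
    apply Finset.sum_congr rfl
    intro i _
    rw [LinearMap.smul_apply, SetLike.val_smul, smul_eq_mul, hpow i z]
  have h2 : (∑ i ∈ Finset.range (p.natDegree + 1), p.coeff i * f ^ i) *
      (X (Fin.last m) ^ (m * t)) = 0 := by
    rw [Finset.sum_mul]
    calc ∑ i ∈ Finset.range (p.natDegree + 1), p.coeff i * f ^ i * X (Fin.last m) ^ (m * t)
        = ∑ i ∈ Finset.range (p.natDegree + 1),
            p.coeff i * (f ^ i * (X (Fin.last m) ^ (m * t))) := by
          apply Finset.sum_congr rfl; intros; ring
      _ = 0 := h1.symm.trans h0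
  have hXp : (X (Fin.last m) ^ (m * t) : MvPolynomial (Fin (m+1)) K) ≠ 0 :=
    pow_ne_zero _ (MvPolynomial.X_ne_zero _)
  have hsum0 : ∑ i ∈ Finset.range (p.natDegree + 1), p.coeff i * f ^ i = 0 := by
    rcases mul_eq_zero.mp h2 with h | h
    · exact h
    · exact absurd h hXp
  have hN0 : p.natDegree ≠ 0 := by
    intro h
    rw [h, Finset.sum_range_one, pow_zero, mul_one] at hsum0
    have hc := hmon.coeff_natDegree
    rw [h] at hc
    rw [hc] at hsum0
    exact one_ne_zero hsum0
  refine ⟨p.natDegree, fun i => p.coeff (p.natDegree - i), Nat.pos_of_ne_zero hN0, ?_, ?_⟩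
  · intro i h1i hiN
    have hh := hco (p.natDegree - i)
    rwa [Nat.sub_sub_self hiN] at hh
  · show f ^ p.natDegree + ∑ i ∈ Finset.Icc 1 p.natDegree,
      p.coeff (p.natDegree - i) * f ^ (p.natDegree - i) = 0
    have hbij : ∑ i ∈ Finset.Icc 1 p.natDegree, p.coeff (p.natDegree - i) * f ^ (p.natDegree - i)
        = ∑ k ∈ Finset.range p.natDegree, p.coeff k * f ^ k := by
      refine Finset.sum_nbij' (fun i => p.natDegree - i) (fun k => p.natDegree - k)
        ?_ ?_ ?_ ?_ ?_
      · intro a haa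
        have := Finset.mem_Icc.mp haa
        show p.natDegree - a ∈ Finset.range p.natDegree
        exact Finset.mem_range.mpr (by omega)
      · intro a haa
        have := Finset.mem_range.mp haa
        show p.natDegree - a ∈ Finset.Icc 1 p.natDegree
        exact Finset.mem_Icc.mpr (by omega)
      · intro a haa
        have := Finset.mem_Icc.mp haa
        show p.natDegree - (p.natDegree - a) = a
        omega
      · intro a haa
        have := Finset.mem_range.mp haa
        show p.natDegree - (p.natDegree - a) = a
        omega
      · intro a _
        rfl
    rw [hbij]
    rw [Finset.sum_range_succ, hmon.coeff_natDegree, one_mul] at hsum0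
    linear_combination hsum0

end Stmt17Aux

/-- the integral closure of `(x_1^d, …, x_{n-1}^d, x_n^t)` equals
`L(P,a)` with `a_i = ⌈it/d⌉`. -/
theorem stmt17 (K : Type) [Field K] (m : ℕ) (d t : ℕ) (hd : 0 < d) (hdt : d ≤ t) :
    intClo (Ideal.span
        ({f | ∃ i : Fin (m + 1), i ≠ Fin.last m ∧ f = X i ^ d} ∪ {X (Fin.last m) ^ t})) =
      (↑(Lideal K m d fun i => (i * t + d - 1) / d) :
        Set (MvPolynomial (Fin (m + 1)) K)) := by
  show intClo (Stmt17Aux.Iid K m d t) = _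
  ext f
  constructor
  · intro hf
    exact SetLike.mem_coe.mpr
      (Stmt17Aux.Wid_le_Lideal m d t hd (Stmt17Aux.intClo_mem_Wid hf))
  · intro hf
    exact Stmt17Aux.Wid_mem_intClo hd hdt
      (Stmt17Aux.Lideal_le_Wid m d t hd (SetLike.mem_coe.mp hf))

end
end

section
/- Let K be a field, a = (a_0,...,a_d) a strictly increasing sequence of natural numbers with a_0 = 0, n > 1, and P = (x_1,...,x_{n-1}) in R = K[x_1,...,x_n]. Then L(P,a) = Σ_{i=0}^d P^{d-i}x_n^{a_i} is integrally closed in R if and only if L((x_1),a) = Σ_{i=0}^d (x_1)^{d-i}x_2^{a_i} is integrally closed in K[x_1,x_2]. -/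
open MvPolynomial

noncomputable section

set_option maxHeartbeats 1000000

namespace Stmt18Aux
open Pointwise

variable {K : Type} [Field K] {m : ℕ}

/-- weighted sum of an exponent vector -/
def wsum {n : ℕ} (w : Fin n → ℕ) (α : Fin n →₀ ℕ) : ℕ := ∑ i, w i * α i

lemma wsum_add {n : ℕ} (w : Fin n → ℕ) (α β : Fin n →₀ ℕ) :
    wsum w (α + β) = wsum w α + wsum w β := by
  simp [wsum, Finsupp.add_apply, mul_add, Finset.sum_add_distrib]

lemma wsum_le {n : ℕ} (w : Fin n → ℕ) {α β : Fin n →₀ ℕ} (h : α ≤ β) :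
    wsum w α ≤ wsum w β :=
  Finset.sum_le_sum fun i _ => Nat.mul_le_mul_left _ (Finsupp.le_def.mp h i)

/-- sum of the exponents away from the last variable -/
def degP {m : ℕ} (α : Fin (m+1) →₀ ℕ) : ℕ := ∑ i ∈ Finset.univ.erase (Fin.last m), α i

lemma degP_add (α β : Fin (m+1) →₀ ℕ) : degP (α + β) = degP α + degP β := by
  simp [degP, Finsupp.add_apply, Finset.sum_add_distrib]

lemma degP_le {α β : Fin (m+1) →₀ ℕ} (h : α ≤ β) : degP α ≤ degP β :=
  Finset.sum_le_sum fun i _ => Finsupp.le_def.mp h i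

lemma degP_single_last (b : ℕ) : degP (Finsupp.single (Fin.last m) b) = 0 := by
  apply Finset.sum_eq_zero
  intro i hi
  rw [Finsupp.single_apply, if_neg]
  exact fun h => (Finset.mem_erase.mp hi).1 h.symm

lemma degP_single_ne {i : Fin (m+1)} (hi : i ≠ Fin.last m) (b : ℕ) :
    degP (Finsupp.single i b) = b := by
  rw [degP, Finset.sum_eq_single i]
  · simp
  · intro j hj hji
    rw [Finsupp.single_apply, if_neg (fun h => hji h.symm)]
  · intro h
    exact absurd (Finset.mem_erase.mpr ⟨hi, Finset.mem_univ i⟩) h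

lemma degP_zero : degP (0 : Fin (m+1) →₀ ℕ) = 0 := by simp [degP]

lemma wsum_ifweight (lam mu : ℕ) (α : Fin (m+1) →₀ ℕ) :
    wsum (fun i => if i = Fin.last m then mu else lam) α = lam * degP α + mu * α (Fin.last m) := by
  rw [wsum, ← Finset.sum_erase_add _ _ (Finset.mem_univ (Fin.last m)), if_pos rfl]
  congr 1
  rw [degP, Finset.mul_sum]
  apply Finset.sum_congr rfl
  intro i hi
  rw [if_neg (Finset.mem_erase.mp hi).1]

/-- the generating exponents of `Lideal` -/
def Eset (m d : ℕ) (a : ℕ → ℕ) : Set (Fin (m+1) →₀ ℕ) :=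
  {e | ∃ i ≤ d, degP e = d - i ∧ e (Fin.last m) = a i}

lemma span_monomial_mul (S T : Set (Fin (m+1) →₀ ℕ)) :
    Ideal.span ((fun e => monomial e (1:K)) '' S) * Ideal.span ((fun e => monomial e (1:K)) '' T)
      = Ideal.span ((fun e => monomial e (1:K)) '' (S + T)) := by
  rw [Ideal.span_mul_span']
  congr 1
  ext f
  constructor
  · rintro ⟨-, ⟨e, he, rfl⟩, -, ⟨g, hg, rfl⟩, rfl⟩
    exact ⟨e + g, Set.add_mem_add he hg, by simp [monomial_mul]⟩
  · rintro ⟨-, ⟨e, he, g, hg, rfl⟩, rfl⟩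
    exact ⟨_, ⟨e, he, rfl⟩, _, ⟨g, hg, rfl⟩, by simp [monomial_mul]⟩

def offLast (m k : ℕ) : Set (Fin (m+1) →₀ ℕ) := {e | degP e = k ∧ e (Fin.last m) = 0}

lemma eq_zero_of_offLast_zero {e : Fin (m+1) →₀ ℕ} (h : e ∈ offLast m 0) : e = 0 := by
  obtain ⟨h1, h2⟩ := h
  ext i
  by_cases hi : i = Fin.last m
  · simpa [hi] using h2
  · have := Finset.sum_eq_zero_iff.mp h1 i (Finset.mem_erase.mpr ⟨hi, Finset.mem_univ i⟩)
    simpa using this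

lemma Pid_pow (k : ℕ) :
    Pid K m ^ k = Ideal.span ((fun e => monomial e (1:K)) '' offLast m k) := by
  induction k with
  | zero =>
    rw [pow_zero]
    have hset : offLast m 0 = {0} := by
      ext e
      constructor
      · exact fun h => eq_zero_of_offLast_zero h
      · rintro rfl; exact ⟨degP_zero, rfl⟩
    rw [hset]
    simp only [Set.image_singleton]
    rw [Ideal.one_eq_top, eq_comm, Ideal.span_singleton_eq_top]
    simp [monomial_zero', isUnit_one]
  | succ k ih =>
    have hPid : Pid K m = Ideal.span ((fun e => monomial e (1:K)) ''
        {e | ∃ i : Fin (m+1), i ≠ Fin.last m ∧ e = Finsupp.single i 1}) := by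
      unfold Pid
      congr 1
      ext f
      have hX : ∀ i : Fin (m+1), (X i : MvPolynomial (Fin (m+1)) K) = monomial (Finsupp.single i 1) 1 := by
        intro i
        rw [← pow_one (X i), X_pow_eq_monomial]
      constructor
      · rintro ⟨i, hi, rfl⟩
        exact ⟨Finsupp.single i 1, ⟨i, hi, rfl⟩, (hX i).symm⟩
      · rintro ⟨e, ⟨i, hi, rfl⟩, rfl⟩
        exact ⟨i, hi, hX i⟩
    rw [pow_succ, ih, hPid, span_monomial_mul]
    have hsets : offLast m k + {e : Fin (m+1) →₀ ℕ | ∃ i, i ≠ Fin.last m ∧ e = Finsupp.single i 1}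
        = offLast m (k+1) := by
      ext e
      rw [Set.mem_add]
      constructor
      · rintro ⟨e₁, ⟨h1, h2⟩, e₂, ⟨i, hi, rfl⟩, rfl⟩
        constructor
        · rw [degP_add, h1, degP_single_ne hi]
        · rw [Finsupp.add_apply, h2, Finsupp.single_apply, if_neg hi]
          simp
      · rintro ⟨h1, h2⟩
        have hex : ∃ i ∈ Finset.univ.erase (Fin.last m), 0 < e i := by
          by_contra hc
          push_neg at hc
          have : degP e = 0 := Finset.sum_eq_zero fun i hi => Nat.le_zero.mp (hc i hi)
          omega
        obtain ⟨i, hi, hpos⟩ := hex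
        have hine : i ≠ Fin.last m := (Finset.mem_erase.mp hi).1
        have hle : Finsupp.single i 1 ≤ e := Finsupp.single_le_iff.mpr hpos
        refine ⟨e - Finsupp.single i 1, ⟨?_, ?_⟩, Finsupp.single i 1, ⟨i, hine, rfl⟩, tsub_add_cancel_of_le hle⟩
        · have heq : (e - Finsupp.single i 1) + Finsupp.single i 1 = e := tsub_add_cancel_of_le hle
          have := degP_add (e - Finsupp.single i 1) (Finsupp.single i 1)
          rw [heq, h1, degP_single_ne hine] at this
          omega
        · rw [Finsupp.tsub_apply, h2, Finsupp.single_apply, if_neg hine]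
          simp
    rw [hsets]

lemma sum_span_image {ι : Type} (s : Finset ι) (F : ι → Set (Fin (m+1) →₀ ℕ)) :
    ∑ i ∈ s, Ideal.span ((fun e => monomial e (1:K)) '' F i)
      = Ideal.span ((fun e => monomial e (1:K)) '' ⋃ i ∈ s, F i) := by
  classical
  induction s using Finset.induction_on with
  | empty => simp
  | insert x s hx ih =>
    rw [Finset.sum_insert hx, ih, Finset.set_biUnion_insert, Set.image_union, Ideal.span_union,
      Submodule.add_eq_sup]

def Ei (m d : ℕ) (a : ℕ → ℕ) (i : ℕ) : Set (Fin (m+1) →₀ ℕ) :=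
  {e | degP e = d - i ∧ e (Fin.last m) = a i}

lemma summand_eq_span (d : ℕ) (a : ℕ → ℕ) (i : ℕ) :
    Pid K m ^ (d - i) * Ideal.span {X (Fin.last m) ^ a i}
      = Ideal.span ((fun e => monomial e (1:K)) '' Ei m d a i) := by
  have h1 : ({X (Fin.last m) ^ a i} : Set (MvPolynomial (Fin (m+1)) K))
      = (fun e => monomial e (1:K)) '' {Finsupp.single (Fin.last m) (a i)} := by
    rw [Set.image_singleton, X_pow_eq_monomial]
  rw [Pid_pow, h1, span_monomial_mul]
  have hsets : offLast m (d - i) + ({Finsupp.single (Fin.last m) (a i)} : Set (Fin (m+1) →₀ ℕ))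
      = Ei m d a i := by
    ext e
    rw [Set.mem_add]
    constructor
    · rintro ⟨e₁, ⟨h1, h2⟩, e₂, rfl, rfl⟩
      constructor
      · rw [degP_add, h1, degP_single_last, add_zero]
      · rw [Finsupp.add_apply, h2, Finsupp.single_eq_same, zero_add]
    · rintro ⟨h1, h2⟩
      have hle : Finsupp.single (Fin.last m) (a i) ≤ e := Finsupp.single_le_iff.mpr h2.ge
      refine ⟨e - Finsupp.single (Fin.last m) (a i), ⟨?_, ?_⟩, Finsupp.single (Fin.last m) (a i),
        rfl, tsub_add_cancel_of_le hle⟩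
      · have heq := degP_add (e - Finsupp.single (Fin.last m) (a i)) (Finsupp.single (Fin.last m) (a i))
        rw [tsub_add_cancel_of_le hle, h1, degP_single_last] at heq
        omega
      · rw [Finsupp.tsub_apply, h2, Finsupp.single_eq_same, Nat.sub_self]
  rw [hsets]

lemma Lideal_eq_span (d : ℕ) (a : ℕ → ℕ) :
    Lideal K m d a = Ideal.span ((fun e => monomial e (1:K)) '' Eset m d a) := by
  unfold Lideal
  have : ∀ i ∈ Finset.range (d+1), Pid K m ^ (d - i) * Ideal.span {X (Fin.last m) ^ a i}
      = Ideal.span ((fun e => monomial e (1:K)) '' Ei m d a i) := fun i _ => summand_eq_span d a i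
  rw [Finset.sum_congr rfl this, sum_span_image]
  have hsets : (⋃ i ∈ Finset.range (d+1), Ei m d a i) = Eset m d a := by
    ext e
    simp only [Set.mem_iUnion, Eset, Set.mem_setOf_eq, Ei, Finset.mem_range, exists_prop]
    constructor
    · rintro ⟨i, hi, ha, hb⟩
      exact ⟨i, by omega, ha, hb⟩
    · rintro ⟨i, hi, h1, h2⟩
      exact ⟨i, by omega, h1, h2⟩
  rw [hsets]

lemma exists_le_degP {α : Fin (m+1) →₀ ℕ} {k : ℕ} (hk : k ≤ degP α) :
    ∃ β : Fin (m+1) →₀ ℕ, β ≤ α ∧ β (Fin.last m) = 0 ∧ degP β = k := by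
  induction k with
  | zero => exact ⟨0, zero_le, rfl, degP_zero⟩
  | succ k ih =>
    obtain ⟨β, hβα, hβl, hβd⟩ := ih (by omega)
    have hlt : ∑ i ∈ Finset.univ.erase (Fin.last m), β i
        < ∑ i ∈ Finset.univ.erase (Fin.last m), α i := by
      have : degP β < degP α := by omega
      exact this
    obtain ⟨j, hj, hjlt⟩ := Finset.exists_lt_of_sum_lt hlt
    have hjne : j ≠ Fin.last m := (Finset.mem_erase.mp hj).1
    refine ⟨β + Finsupp.single j 1, ?_, ?_, ?_⟩
    · rw [Finsupp.le_def]
      intro i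
      rw [Finsupp.add_apply, Finsupp.single_apply]
      by_cases hij : j = i
      · subst hij; rw [if_pos rfl]; omega
      · rw [if_neg hij]
        exact Nat.add_zero (β i) ▸ (Finsupp.le_def.mp hβα i)
    · rw [Finsupp.add_apply, hβl, Finsupp.single_apply, if_neg hjne]
      simp
    · rw [degP_add, hβd, degP_single_ne hjne]

lemma mem_Lideal_iff {d : ℕ} {a : ℕ → ℕ} {f : MvPolynomial (Fin (m+1)) K} :
    f ∈ Lideal K m d a ↔
      ∀ α ∈ f.support, ∃ i ≤ d, d - i ≤ degP α ∧ a i ≤ α (Fin.last m) := by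
  rw [Lideal_eq_span, mem_ideal_span_monomial_image]
  apply forall₂_congr
  intro α hα
  constructor
  · rintro ⟨e, ⟨i, hi, h1, h2⟩, hle⟩
    exact ⟨i, hi, h1 ▸ degP_le hle, h2 ▸ Finsupp.le_def.mp hle (Fin.last m)⟩
  · rintro ⟨i, hi, h1, h2⟩
    obtain ⟨β, hβα, hβl, hβd⟩ := exists_le_degP h1
    refine ⟨β + Finsupp.single (Fin.last m) (a i), ⟨i, hi, ?_, ?_⟩, ?_⟩
    · rw [degP_add, hβd, degP_single_last, add_zero]
    · rw [Finsupp.add_apply, hβl, Finsupp.single_eq_same, zero_add]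
    · rw [Finsupp.le_def]
      intro x
      rw [Finsupp.add_apply, Finsupp.single_apply]
      by_cases hx : Fin.last m = x
      · subst hx; rw [if_pos rfl, hβl, zero_add]; exact h2
      · rw [if_neg hx, add_zero]; exact Finsupp.le_def.mp hβα x

section Weights
variable {n : ℕ}

/-- the ideal of polynomials all whose monomials have `w`-weight at least `c` -/
def Jid (w : Fin n → ℕ) (c : ℕ) : Ideal (MvPolynomial (Fin n) K) where
  carrier := {f | ∀ e ∈ f.support, c ≤ wsum w e}
  zero_mem' := by simp
  add_mem' := by
    classical
    intro f g hf hg e he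
    rcases Finset.mem_union.mp (MvPolynomial.support_add he) with h | h
    exacts [hf e h, hg e h]
  smul_mem' := by
    classical
    intro g f hf e he
    rw [smul_eq_mul] at he
    obtain ⟨e₁, he₁, e₂, he₂, rfl⟩ := Finset.mem_add.mp (MvPolynomial.support_mul g f he)
    rw [wsum_add]
    exact le_add_self.trans (Nat.add_le_add_left (hf e₂ he₂) _)

lemma mem_Jid {w : Fin n → ℕ} {c : ℕ} {f : MvPolynomial (Fin n) K} :
    f ∈ Jid w c ↔ ∀ e ∈ f.support, c ≤ wsum w e := Iff.rfl

lemma Jid_anti {w : Fin n → ℕ} {c c' : ℕ} (h : c' ≤ c) : Jid (K := K) w c ≤ Jid w c' :=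
  fun _ hf e he => h.trans (hf e he)

lemma Jid_mul_le {w : Fin n → ℕ} {c c' : ℕ} :
    Jid (K := K) w c * Jid w c' ≤ Jid w (c + c') := by
  classical
  rw [Ideal.mul_le]
  intro f hf g hg e he
  obtain ⟨e₁, he₁, e₂, he₂, rfl⟩ := Finset.mem_add.mp (MvPolynomial.support_mul f g he)
  rw [wsum_add]
  exact Nat.add_le_add (hf e₁ he₁) (hg e₂ he₂)

lemma pow_le_Jid {w : Fin n → ℕ} {c : ℕ} {I : Ideal (MvPolynomial (Fin n) K)}
    (hI : I ≤ Jid w c) (k : ℕ) : I ^ k ≤ Jid w (k * c) := by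
  induction k with
  | zero =>
    rw [pow_zero, Ideal.one_eq_top]
    intro f _ e _
    simp
  | succ k ih =>
    rw [pow_succ]
    calc I ^ k * I ≤ Jid w (k * c) * Jid w c := Ideal.mul_mono ih hI
    _ ≤ Jid w (k * c + c) := Jid_mul_le
    _ = Jid w ((k+1) * c) := by ring_nf

/-- the homogenizing map sending `X i` to `C (X i) * Y ^ (w i)` -/
def Psi (w : Fin n → ℕ) : MvPolynomial (Fin n) K →ₐ[K] Polynomial (MvPolynomial (Fin n) K) :=
  aeval (fun i => Polynomial.C (X i) * Polynomial.X ^ w i)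

lemma Psi_monomial (w : Fin n → ℕ) (e : Fin n →₀ ℕ) (c : K) :
    Psi w (monomial e c) = Polynomial.C (monomial e c) * Polynomial.X ^ (wsum w e) := by
  classical
  rw [Psi, aeval_monomial]
  have h1 : (e.prod fun i k => (Polynomial.C (X i (R := K)) * Polynomial.X ^ w i) ^ k)
      = Polynomial.C (monomial e (1:K)) * Polynomial.X ^ (wsum w e) := by
    rw [Finsupp.prod]
    have : ∀ i ∈ e.support, (Polynomial.C (X i (R := K)) * Polynomial.X ^ w i) ^ e i
        = Polynomial.C (X i ^ e i) * Polynomial.X ^ (w i * e i) := by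
      intro i _
      rw [mul_pow, ← Polynomial.C_pow, pow_mul]
    rw [Finset.prod_congr rfl this, Finset.prod_mul_distrib, ← map_prod,
      prod_X_pow_eq_monomial, Finset.prod_pow_eq_pow_sum]
    have hsum : ∑ i ∈ e.support, w i * e i = wsum w e := by
      rw [wsum]
      apply Finset.sum_subset (Finset.subset_univ _)
      intro i _ hi
      rw [Finsupp.notMem_support_iff.mp hi, mul_zero]
    rw [hsum]
  rw [h1]
  have h2 : algebraMap K (Polynomial (MvPolynomial (Fin n) K)) c = Polynomial.C (C c) := rfl
  rw [h2, ← mul_assoc, ← Polynomial.C_mul]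
  congr 2
  rw [C_mul_monomial, mul_one]

lemma coeff_Psi (w : Fin n → ℕ) (f : MvPolynomial (Fin n) K) (k : ℕ) :
    (Psi w f).coeff k
      = ∑ e ∈ f.support.filter (fun e => wsum w e = k), monomial e (coeff e f) := by
  classical
  conv_lhs => rw [f.as_sum, map_sum, Polynomial.finset_sum_coeff]
  rw [Finset.sum_filter]
  apply Finset.sum_congr rfl
  intro e _
  rw [Psi_monomial, Polynomial.coeff_C_mul, Polynomial.coeff_X_pow]
  by_cases h : wsum w e = k
  · rw [if_pos h, if_pos h.symm, mul_one]
  · rw [if_neg h, if_neg (fun hh => h hh.symm), mul_zero]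

lemma psi_bridge {w : Fin n → ℕ} {c : ℕ} {f : MvPolynomial (Fin n) K} :
    (∀ e ∈ f.support, c ≤ wsum w e) ↔ (c : ℕ∞) ≤ (Psi w f).trailingDegree := by
  classical
  constructor
  · intro h
    apply Finset.le_min
    intro b hb
    have hco : (Psi w f).coeff b ≠ 0 := Polynomial.mem_support_iff.mp hb
    rw [coeff_Psi] at hco
    obtain ⟨e, he, -⟩ := Finset.exists_ne_zero_of_sum_ne_zero hco
    obtain ⟨hef, hwe⟩ := Finset.mem_filter.mp he
    exact Nat.cast_le.mpr (hwe ▸ h e hef)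
  · intro h e₀ he₀
    have hco : (Psi w f).coeff (wsum w e₀) ≠ 0 := by
      rw [coeff_Psi]
      have : MvPolynomial.coeff e₀
          (∑ e ∈ f.support.filter (fun e => wsum w e = wsum w e₀), monomial e (coeff e f))
          = coeff e₀ f := by
        rw [MvPolynomial.coeff_sum]
        calc ∑ x ∈ Finset.filter (fun e => wsum w e = wsum w e₀) f.support,
              coeff e₀ (monomial x (coeff x f))
            = coeff e₀ (monomial e₀ (coeff e₀ f)) :=
              Finset.sum_eq_single_of_mem e₀ (Finset.mem_filter.mpr ⟨he₀, rfl⟩)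
                (fun e _ hne => by rw [coeff_monomial, if_neg hne])
          _ = coeff e₀ f := by rw [coeff_monomial, if_pos rfl]
      intro hzero
      rw [hzero] at this
      simp only [MvPolynomial.coeff_zero] at this
      exact (MvPolynomial.mem_support_iff.mp he₀) this.symm
    have hmem : wsum w e₀ ∈ (Psi w f).support := Polynomial.mem_support_iff.mpr hco
    have := Finset.min_le hmem
    exact Nat.cast_le.mp (h.trans this)

lemma trailingDegree_pow_le {R : Type} [CommRing R] [IsDomain R] {p : Polynomial R} {o : ℕ}
    (h : p.trailingDegree ≤ (o : ℕ∞)) (t : ℕ) : (p ^ t).trailingDegree ≤ ((t * o : ℕ) : ℕ∞) := by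
  induction t with
  | zero => simp
  | succ t ih =>
    rw [pow_succ, Polynomial.trailingDegree_mul]
    have : ((t+1) * o : ℕ) = (t * o) + o := by ring
    rw [this, Nat.cast_add]
    exact add_le_add ih h

/-- The key valuation-theoretic bound: every element integral over `I ≤ Jid w c`
lies in `Jid w c`. -/
lemma intClo_le_Jid {w : Fin n → ℕ} {c : ℕ} {I : Ideal (MvPolynomial (Fin n) K)}
    (hI : I ≤ Jid w c) {f : MvPolynomial (Fin n) K} (hf : f ∈ intClo I) : f ∈ Jid w c := by
  classical
  by_contra hc
  rw [mem_Jid] at hc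
  push_neg at hc
  obtain ⟨e₀, he₀, hlt⟩ := hc
  have hf0 : f ≠ 0 := fun h => by simp [h] at he₀
  have hne : (f.support.image (wsum w)).Nonempty := ⟨wsum w e₀, Finset.mem_image_of_mem _ he₀⟩
  set o := (f.support.image (wsum w)).min' hne with ho
  have ho_le : o ≤ wsum w e₀ := Finset.min'_le _ _ (Finset.mem_image_of_mem _ he₀)
  have hoc : o + 1 ≤ c := by omega
  have hfo : f ∈ Jid w o := fun e he => Finset.min'_le _ _ (Finset.mem_image_of_mem _ he)
  obtain ⟨e₁, he₁, hwe₁⟩ := Finset.mem_image.mp ((f.support.image (wsum w)).min'_mem hne)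
  obtain ⟨t, r, ht, hr, heq⟩ := hf
  set S := ∑ i ∈ Finset.Icc 1 t, r i * f ^ (t - i) with hS
  have hSJ : S ∈ Jid w (t * o + 1) := by
    apply Ideal.sum_mem
    intro i hi
    obtain ⟨hi1, hi2⟩ := Finset.mem_Icc.mp hi
    have h1 : r i ∈ Jid w (i * c) := pow_le_Jid hI i (hr i hi1 hi2)
    have h2 : f ^ (t - i) ∈ Jid w ((t - i) * o) :=
      pow_le_Jid (le_refl (Jid w o)) (t - i) (Ideal.pow_mem_pow hfo (t - i))
    have h3 := Jid_mul_le (Ideal.mul_mem_mul h1 h2)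
    apply Jid_anti _ h3
    have hio : i * (o + 1) ≤ i * c := Nat.mul_le_mul_left _ hoc
    have hio2 : i * o + (t - i) * o = t * o := by
      rw [← Nat.add_mul]
      congr 1
      omega
    have hio3 : i * (o + 1) = i * o + i := by ring
    omega
  have heq2 : f ^ t = -S := by
    linear_combination heq
  -- trailing degree of Psi f is at most o
  have hDle : (Psi w f).trailingDegree ≤ (o : ℕ∞) := by
    by_contra hD
    push_neg at hD
    have : ((o + 1 : ℕ) : ℕ∞) ≤ (Psi w f).trailingDegree := by
      exact_mod_cast Order.add_one_le_of_lt hD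
    have := psi_bridge.mpr this e₁ he₁
    omega
  have hup : ((t * o + 1 : ℕ) : ℕ∞) ≤ (Psi w (f ^ t)).trailingDegree := by
    rw [heq2, map_neg, Polynomial.trailingDegree_neg]
    exact psi_bridge.mp hSJ
  have hdown : (Psi w (f ^ t)).trailingDegree ≤ ((t * o : ℕ) : ℕ∞) := by
    rw [map_pow]
    exact trailingDegree_pow_le hDle t
  have := hup.trans hdown
  rw [Nat.cast_le] at this
  omega

end Weights

/-- integral closure transfers along ring homomorphisms -/
lemma intClo_map {A B : Type} [CommRing A] [CommRing B] (φ : A →+* B) {I : Ideal A}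
    {J : Ideal B} (h : Ideal.map φ I ≤ J) {f : A} (hf : f ∈ intClo I) : φ f ∈ intClo J := by
  obtain ⟨t, r, ht, hr, heq⟩ := hf
  refine ⟨t, fun i => φ (r i), ht, ?_, ?_⟩
  · intro i h1 h2
    have := Ideal.mem_map_of_mem φ (hr i h1 h2)
    rw [Ideal.map_pow] at this
    exact Ideal.pow_right_mono h i this
  · have := congrArg φ heq
    rw [map_add, map_pow, map_sum, map_zero] at this
    rw [← this]
    congr 1
    apply Finset.sum_congr rfl
    intro i _
    rw [map_mul, map_pow]

/-- The key 2-dimensional discrete convexity lemma. -/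
lemma comb (d : ℕ) (a : ℕ → ℕ) (hmono : ∀ i j, i < j → j ≤ d → a i < a j)
    (j t : ℕ) (hj1 : 1 ≤ j) (hjd : j ≤ d) (ht : t < a j) :
    (∃ i₁ i₂, i₁ < j ∧ j < i₂ ∧ i₂ ≤ d ∧
        (i₂ - j) * a i₁ + (j - i₁) * a i₂ ≤ (i₂ - i₁) * t) ∨
    (∃ lam mu : ℕ, 1 ≤ lam ∧ 1 ≤ mu ∧ ∀ i ≤ d, mu * t + lam * i < mu * a i + lam * j) := by
  classical
  set T : Finset (ℕ × ℕ) := (Finset.range (d+1) ×ˢ Finset.range (d+1)).filter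
    (fun p => p.1 ≤ j ∧ j ≤ p.2 ∧ p.1 < p.2) with hT
  have memT : ∀ p : ℕ × ℕ, p ∈ T ↔ (p.1 ≤ d ∧ p.2 ≤ d ∧ p.1 ≤ j ∧ j ≤ p.2 ∧ p.1 < p.2) := by
    intro p
    rw [hT, Finset.mem_filter, Finset.mem_product, Finset.mem_range, Finset.mem_range]
    omega
  set g : ℕ × ℕ → ℚ := fun p =>
    (((p.2 : ℚ) - j) * a p.1 + ((j : ℚ) - p.1) * a p.2) / ((p.2 : ℚ) - p.1) with hg
  have hTne : ((j-1, j) : ℕ × ℕ) ∈ T := (memT _).mpr (by omega)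
  obtain ⟨p, hpT, hpmin⟩ := Finset.exists_min_image T g ⟨(j-1, j), hTne⟩
  obtain ⟨i₁, i₂⟩ := p
  obtain ⟨hi₁d, hi₂d, h1j, hj2, h12⟩ := (memT _).mp hpT
  set V : ℚ := g (i₁, i₂) with hVdef
  have hden : (0:ℚ) < (i₂:ℚ) - (i₁:ℚ) := by
    have : (i₁:ℚ) < (i₂:ℚ) := Nat.cast_lt.mpr h12
    linarith
  have hV : ((i₂:ℚ) - i₁) * V = ((i₂:ℚ) - j) * a i₁ + ((j:ℚ) - i₁) * a i₂ := by
    rw [hVdef, hg]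
    field_simp
  have hmin' : ∀ q ∈ T, ((q.2:ℚ) - q.1) * V ≤ ((q.2:ℚ) - j) * a q.1 + ((j:ℚ) - q.1) * a q.2 := by
    intro q hq
    have hlt := ((memT _).mp hq).2.2.2.2
    have hd : (0:ℚ) < (q.2:ℚ) - q.1 := by
      have : (q.1:ℚ) < (q.2:ℚ) := Nat.cast_lt.mpr hlt
      linarith
    have h := hpmin q hq
    rw [hVdef] at h ⊢
    rw [hg] at h
    rw [le_div_iff₀ hd] at h
    calc ((q.2:ℚ) - q.1) * g (i₁, i₂) = g (i₁, i₂) * ((q.2:ℚ) - q.1) := by ring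
    _ ≤ _ := h
  have hpmin' : ∀ x ∈ T, V ≤ g x := hpmin
  clear_value V
  by_cases hcase : V < (a j : ℚ)
  · -- Case I : the minimum is below a j, minimizer is interior
    have hi₁j : i₁ < j := by
      rcases Nat.lt_or_ge i₁ j with h | h
      · exact h
      · exfalso
        have hij : i₁ = j := by omega
        subst hij
        have : V = (a i₁ : ℚ) := by
          apply mul_left_cancel₀ (ne_of_gt hden)
          rw [hV]
          ring
        rw [this] at hcase
        exact lt_irrefl _ hcase
    have hji₂ : j < i₂ := by
      rcases Nat.lt_or_ge j i₂ with h | h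
      · exact h
      · exfalso
        have hij : i₂ = j := by omega
        subst hij
        have : V = (a i₂ : ℚ) := by
          apply mul_left_cancel₀ (ne_of_gt hden)
          rw [hV]
          ring
        rw [this] at hcase
        exact lt_irrefl _ hcase
    by_cases hAcase : V ≤ (t:ℚ)
    · left
      refine ⟨i₁, i₂, hi₁j, hji₂, hi₂d, ?_⟩
      have h2 : ((i₂:ℚ) - j) * a i₁ + ((j:ℚ) - i₁) * a i₂ ≤ ((i₂:ℚ) - i₁) * t := by
        rw [← hV]
        exact mul_le_mul_of_nonneg_left hAcase hden.le
      qify [hj2, h1j, h12.le]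
      push_cast at h2 ⊢
      linarith
    · right
      push_neg at hAcase
      have hai : a i₁ < a i₂ := hmono i₁ i₂ h12 hi₂d
      refine ⟨a i₂ - a i₁, i₂ - i₁, by omega, by omega, ?_⟩
      have hlam : ((a i₂:ℚ) - a i₁) > 0 := by
        have : (a i₁:ℚ) < a i₂ := Nat.cast_lt.mpr hai
        linarith
      have hmain : ∀ i ≤ d, ((i₂:ℚ) - i₁) * V + ((a i₂:ℚ) - a i₁) * i
          ≤ ((i₂:ℚ) - i₁) * a i + ((a i₂:ℚ) - a i₁) * j := by
        intro i hid
        by_contra hneg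
        push_neg at hneg
        rcases lt_trichotomy i j with hij | hij | hij
        · -- i < j, use the pair (i, i₂)
          have hqT : ((i, i₂) : ℕ × ℕ) ∈ T := (memT _).mpr (by omega)
          have hq := hmin' (i, i₂) hqT
          simp only at hq
          have hposa : (0:ℚ) < (i₂:ℚ) - j := by
            have : (j:ℚ) < (i₂:ℚ) := Nat.cast_lt.mpr hji₂
            linarith
          have hposb : (0:ℚ) < (j:ℚ) - i := by
            have : (i:ℚ) < (j:ℚ) := Nat.cast_lt.mpr hij
            linarith
          have h4 := mul_lt_mul_of_pos_left hneg hposa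
          have h5 := mul_le_mul_of_nonneg_left hq (by linarith : (0:ℚ) ≤ (i₂:ℚ) - i₁)
          have h6 : ((i₂:ℚ) - i₁) * a i₂ - ((a i₂:ℚ) - a i₁) * ((i₂:ℚ) - j)
              = ((i₂:ℚ) - i₁) * V := by linear_combination -hV
          have h7 : ((j:ℚ) - i) * (((i₂:ℚ) - i₁) * a i₂ - ((a i₂:ℚ) - a i₁) * ((i₂:ℚ) - j))
              = ((j:ℚ) - i) * (((i₂:ℚ) - i₁) * V) := by rw [h6]
          linarith [h4, h5, h7]
        · -- i = j
          rw [hij] at hneg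
          have : ((i₂:ℚ) - i₁) * V < ((i₂:ℚ) - i₁) * a j := mul_lt_mul_of_pos_left hcase hden
          linarith
        · -- j < i, use the pair (i₁, i)
          have hqT : ((i₁, i) : ℕ × ℕ) ∈ T := (memT _).mpr (by omega)
          have hq := hmin' (i₁, i) hqT
          simp only at hq
          have hposa : (0:ℚ) < (j:ℚ) - i₁ := by
            have : (i₁:ℚ) < (j:ℚ) := Nat.cast_lt.mpr hi₁j
            linarith
          have hposb : (0:ℚ) < (i:ℚ) - j := by
            have : (j:ℚ) < (i:ℚ) := Nat.cast_lt.mpr hij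
            linarith
          have h4 := mul_lt_mul_of_pos_left hneg hposa
          have h5 := mul_le_mul_of_nonneg_left hq (by linarith : (0:ℚ) ≤ (i₂:ℚ) - i₁)
          have h6 : ((i₂:ℚ) - i₁) * a i₁ + ((a i₂:ℚ) - a i₁) * ((j:ℚ) - i₁)
              = ((i₂:ℚ) - i₁) * V := by linear_combination -hV
          have h7 : ((i:ℚ) - j) * (((i₂:ℚ) - i₁) * a i₁ + ((a i₂:ℚ) - a i₁) * ((j:ℚ) - i₁))
              = ((i:ℚ) - j) * (((i₂:ℚ) - i₁) * V) := by rw [h6]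
          linarith [h4, h5, h7]
      intro i hid
      have hm := hmain i hid
      have htV : ((i₂:ℚ) - i₁) * t < ((i₂:ℚ) - i₁) * V := mul_lt_mul_of_pos_left hAcase hden
      qify [hai.le, h12.le]
      push_cast at hm htV ⊢
      linarith
  · -- Case II : all chords through j are at least a j
    push_neg at hcase
    right
    have hminT : ∀ q ∈ T, ((q.2:ℚ) - q.1) * a j ≤ ((q.2:ℚ) - j) * a q.1 + ((j:ℚ) - q.1) * a q.2 := by
      intro q hq
      have hlt := ((memT _).mp hq).2.2.2.2
      have hd : (0:ℚ) ≤ (q.2:ℚ) - q.1 := by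
        have : (q.1:ℚ) < (q.2:ℚ) := Nat.cast_lt.mpr hlt
        linarith
      calc ((q.2:ℚ) - q.1) * a j ≤ ((q.2:ℚ) - q.1) * V := mul_le_mul_of_nonneg_left hcase hd
      _ ≤ _ := hmin' q hq
    obtain ⟨i₀, hi₀mem, hi₀max⟩ := Finset.exists_max_image (Finset.range j)
      (fun i => ((a j:ℚ) - a i)/((j:ℚ) - i)) ⟨j-1, Finset.mem_range.mpr (by omega)⟩
    have hi₀j : i₀ < j := Finset.mem_range.mp hi₀mem
    have hai₀ : a i₀ < a j := hmono i₀ j hi₀j hjd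
    have hposμ : (0:ℚ) < (j:ℚ) - i₀ := by
      have : (i₀:ℚ) < (j:ℚ) := Nat.cast_lt.mpr hi₀j
      linarith
    refine ⟨a j - a i₀, j - i₀, by omega, by omega, ?_⟩
    intro i hid
    have htaj : ((j:ℚ) - i₀) * t < ((j:ℚ) - i₀) * a j := by
      apply mul_lt_mul_of_pos_left _ hposμ
      exact_mod_cast ht
    rcases lt_trichotomy i j with hij | hij | hij
    · -- i < j : maximality of the slope at i₀
      have hmax := hi₀max i (Finset.mem_range.mpr hij)
      have hposi : (0:ℚ) < (j:ℚ) - i := by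
        have : (i:ℚ) < (j:ℚ) := Nat.cast_lt.mpr hij
        linarith
      rw [div_le_div_iff₀ hposi hposμ] at hmax
      qify [hai₀.le, hi₀j.le]
      push_cast at hmax htaj ⊢
      nlinarith [hmax, htaj]
    · rw [hij]
      qify [hai₀.le, hi₀j.le]
      push_cast at htaj ⊢
      linarith
    · -- j < i : use the pair (i₀, i)
      have hqT : ((i₀, i) : ℕ × ℕ) ∈ T := (memT _).mpr (by omega)
      have hq := hminT (i₀, i) hqT
      simp only at hq
      qify [hai₀.le, hi₀j.le]
      push_cast at hq htaj ⊢
      nlinarith [hq, htaj]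

lemma amono {d : ℕ} {a : ℕ → ℕ} (hmono : ∀ i, i < d → a i < a (i + 1)) :
    ∀ i j, i < j → j ≤ d → a i < a j := by
  intro i j
  induction j with
  | zero => omega
  | succ j ih =>
    intro hij hjd
    rcases Nat.lt_or_ge i j with h | h
    · exact lt_trans (ih h (by omega)) (hmono j (by omega))
    · have : i = j := by omega
      subst this
      exact hmono i (by omega)

lemma degP_fin2 (α : Fin (1+1) →₀ ℕ) : degP α = α 0 := by
  rw [degP]
  have h : (Finset.univ.erase (Fin.last 1) : Finset (Fin (1+1))) = {0} := by decide
  rw [h, Finset.sum_singleton]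

lemma last_ne_zero (m : ℕ) (hm : 1 ≤ m) : (0 : Fin (m+1)) ≠ Fin.last m := by
  intro h
  have := congrArg Fin.val h
  simp [Fin.last] at this
  omega

lemma fin2_decomp (e : Fin (1+1) →₀ ℕ) :
    e = Finsupp.single 0 (e 0) + Finsupp.single (Fin.last 1) (e (Fin.last 1)) := by
  ext i
  fin_cases i <;> simp [Finsupp.single_apply] <;> rfl

end Stmt18Aux

open Stmt18Aux in
/-- `L(P,a)` is integrally closed in `K[x_1,…,x_n]` (`n = m+1 > 1`)
iff `L((x_1),a)` is integrally closed in `K[x_1,x_2]`. -/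
theorem stmt18 (K : Type) [Field K] (m : ℕ) (hm : 1 ≤ m) (d : ℕ) (a : ℕ → ℕ)
    (ha0 : a 0 = 0) (hmono : ∀ i, i < d → a i < a (i + 1)) :
    IsIC (Lideal K m d a) ↔ IsIC (Lideal K 1 d a) := by
  classical
  have h0m : (0 : Fin (m+1)) ≠ Fin.last m := last_ne_zero m hm
  have h02 : (0 : Fin (1+1)) ≠ Fin.last 1 := last_ne_zero 1 le_rfl
  constructor
  · -- big implies small
    intro hLm f hf
    set gmap : Fin (1+1) → Fin (m+1) := fun i => if i = 0 then 0 else Fin.last m with hgmap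
    have hg0 : gmap 0 = 0 := by simp [hgmap]
    have hg1 : gmap (Fin.last 1) = Fin.last m := by
      rw [hgmap]
      simp only [if_neg h02.symm]
    have h1eq : (1 : Fin (1+1)) = Fin.last 1 := rfl
    have hginj : Function.Injective gmap := by
      intro x y hxy
      have hx : x = 0 ∨ x = Fin.last 1 := by omega
      have hy : y = 0 ∨ y = Fin.last 1 := by omega
      rcases hx with rfl | rfl <;> rcases hy with rfl | rfl
      · rfl
      · rw [hg0, hg1] at hxy; exact absurd hxy h0m
      · rw [hg0, hg1] at hxy; exact absurd hxy.symm h0m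
      · rfl
    set ρ : MvPolynomial (Fin (1+1)) K →ₐ[K] MvPolynomial (Fin (m+1)) K := rename gmap with hρ
    have hmapDom : ∀ e : Fin (1+1) →₀ ℕ, Finsupp.mapDomain gmap e
        = Finsupp.single (0 : Fin (m+1)) (e 0) + Finsupp.single (Fin.last m) (e (Fin.last 1)) := by
      intro e
      conv_lhs => rw [fin2_decomp e]
      rw [Finsupp.mapDomain_add, Finsupp.mapDomain_single, Finsupp.mapDomain_single, hg0, hg1]
    have hdegmap : ∀ e : Fin (1+1) →₀ ℕ,
        degP (Finsupp.mapDomain gmap e) = e 0 ∧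
        (Finsupp.mapDomain gmap e) (Fin.last m) = e (Fin.last 1) := by
      intro e
      rw [hmapDom e]
      constructor
      · rw [degP_add, degP_single_ne h0m, degP_single_last, add_zero]
      · rw [Finsupp.add_apply, Finsupp.single_apply, if_neg h0m, Finsupp.single_eq_same, zero_add]
    have hmaple : Ideal.map (ρ : MvPolynomial (Fin (1+1)) K →+* MvPolynomial (Fin (m+1)) K)
        (Lideal K 1 d a) ≤ Lideal K m d a := by
      rw [Lideal_eq_span, Lideal_eq_span, Ideal.map_span, Ideal.span_le]
      rintro - ⟨-, ⟨e, ⟨i, hi, he1, he2⟩, rfl⟩, rfl⟩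
      apply Ideal.subset_span
      refine ⟨Finsupp.mapDomain gmap e, ⟨i, hi, ?_, ?_⟩, ?_⟩
      · rw [(hdegmap e).1, ← degP_fin2, he1]
      · rw [(hdegmap e).2, he2]
      · simp [hρ, rename_monomial]
    have hint := intClo_map (ρ : MvPolynomial (Fin (1+1)) K →+* MvPolynomial (Fin (m+1)) K)
      hmaple hf
    have hmem := hLm _ hint
    rw [mem_Lideal_iff] at hmem ⊢
    intro α hα
    have hαmem : Finsupp.mapDomain gmap α ∈ (ρ f).support := by
      have hsupp : (ρ f).support = f.support.image (Finsupp.mapDomain gmap) := by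
        simp only [hρ]
        exact support_rename_of_injective hginj
      rw [hsupp]
      exact Finset.mem_image_of_mem _ hα
    obtain ⟨i, hi, h1, h2⟩ := hmem _ hαmem
    rw [(hdegmap α).1] at h1
    rw [(hdegmap α).2] at h2
    exact ⟨i, hi, by rw [degP_fin2]; exact h1, h2⟩
  · -- small implies big
    intro hL1 f hf
    rw [mem_Lideal_iff]
    intro α hα
    by_contra hno
    push_neg at hno
    set s := degP α with hs
    set t' := α (Fin.last m) with ht'
    have hsd : s < d := by
      by_contra hge
      push_neg at hge
      have := hno 0 (by omega) (by omega)
      omega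
    set jj := d - s with hjj
    have htj : t' < a jj := hno jj (by omega) (by omega)
    rcases comb d a (amono hmono) jj t' (by omega) (by omega) htj with
      ⟨i₁, i₂, hi1, hi2, hi2d, hA⟩ | ⟨lam, mu, hlam, hmu, hB⟩
    · -- Carathéodory case : contradiction with IsIC of L1
      have hu : ∀ i ≤ d, monomial
          (Finsupp.single (0 : Fin (1+1)) (d - i) + Finsupp.single (Fin.last 1) (a i)) (1:K)
          ∈ Lideal K 1 d a := by
        intro i hi
        rw [mem_Lideal_iff]
        intro β hβ
        rw [MvPolynomial.support_monomial, if_neg (one_ne_zero (α := K)),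
          Finset.mem_singleton] at hβ
        subst hβ
        refine ⟨i, hi, ?_, ?_⟩
        · rw [degP_fin2]
          rw [Finsupp.add_apply, Finsupp.single_eq_same, Finsupp.single_apply, if_neg h02.symm]
          omega
        · rw [Finsupp.add_apply, Finsupp.single_apply, if_neg h02, Finsupp.single_eq_same]
          omega
      set k₁ := i₂ - jj with hk₁
      set k₂ := jj - i₁ with hk₂
      set kk := i₂ - i₁ with hkk
      have hkadd : k₁ + k₂ = kk := by omega
      have hkpos : 1 ≤ kk := by omega
      have hqle : k₁ * a i₁ + k₂ * a i₂ ≤ kk * t' := hA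
      set rem := kk * t' - (k₁ * a i₁ + k₂ * a i₂) with hrem
      have hsum2 : k₁ * a i₁ + k₂ * a i₂ + rem = kk * t' := by
        rw [hrem]
        omega
      have hc0 : k₁ * (d - i₁) + k₂ * (d - i₂) = kk * s := by
        rw [hk₁, hk₂, hkk]
        have h1 : d - jj = s := by omega
        rw [← h1]
        zify [(by omega : jj ≤ i₂), (by omega : i₁ ≤ jj), (by omega : i₁ ≤ i₂),
          (by omega : i₁ ≤ d), hi2d, (by omega : jj ≤ d)]
        ring
      set e0 : Fin (1+1) →₀ ℕ := Finsupp.single 0 s + Finsupp.single (Fin.last 1) t' with he0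
      have hexp : kk • e0
          = (k₁ • (Finsupp.single (0:Fin (1+1)) (d - i₁) + Finsupp.single (Fin.last 1) (a i₁))
            + k₂ • (Finsupp.single (0:Fin (1+1)) (d - i₂) + Finsupp.single (Fin.last 1) (a i₂)))
            + Finsupp.single (Fin.last 1) rem := by
        rw [he0]
        simp only [smul_add, Finsupp.smul_single, smul_eq_mul]
        ext x
        have hx : x = 0 ∨ x = Fin.last 1 := by omega
        rcases hx with rfl | rfl
        · simp only [Finsupp.add_apply, Finsupp.single_apply, if_pos rfl,
            if_neg (Ne.symm h02), if_true, add_zero, zero_add]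
          linarith [hc0]
        · simp only [Finsupp.add_apply, Finsupp.single_apply, if_pos rfl, if_neg h02,
            if_true, add_zero, zero_add]
          linarith [hsum2]
      have hgk : (monomial e0 (1:K)) ^ kk
          = ((monomial (Finsupp.single (0:Fin (1+1)) (d - i₁)
                + Finsupp.single (Fin.last 1) (a i₁)) (1:K)) ^ k₁
             * (monomial (Finsupp.single (0:Fin (1+1)) (d - i₂)
                + Finsupp.single (Fin.last 1) (a i₂)) (1:K)) ^ k₂)
            * monomial (Finsupp.single (Fin.last 1) rem) (1:K) := by
        rw [monomial_pow, monomial_pow, monomial_pow, monomial_mul, monomial_mul]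
        rw [one_pow, one_pow, one_pow, one_mul, one_mul, hexp]
      have hmemk : (monomial e0 (1:K)) ^ kk ∈ (Lideal K 1 d a) ^ kk := by
        rw [hgk]
        apply Ideal.mul_mem_right
        rw [← hkadd, pow_add]
        exact Ideal.mul_mem_mul (Ideal.pow_mem_pow (hu i₁ (by omega)) k₁)
          (Ideal.pow_mem_pow (hu i₂ hi2d) k₂)
      have hintmon : monomial e0 (1:K) ∈ intClo (Lideal K 1 d a) := by
        refine ⟨kk, fun i => if i = kk then -((monomial e0 (1:K)) ^ kk) else 0, by omega, ?_, ?_⟩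
        · intro i hi1' hi2'
          dsimp only
          by_cases hik : i = kk
          · rw [if_pos hik, hik]
            exact Submodule.neg_mem _ hmemk
          · rw [if_neg hik]
            exact Ideal.zero_mem _
        · rw [Finset.sum_eq_single_of_mem kk (Finset.mem_Icc.mpr ⟨hkpos, le_refl kk⟩)
            (fun b _ hbne => by dsimp only; rw [if_neg hbne, zero_mul])]
          dsimp only
          rw [if_pos rfl, Nat.sub_self, pow_zero, mul_one]
          ring
      have hmemL := hL1 _ hintmon
      rw [mem_Lideal_iff] at hmemL
      obtain ⟨i, hi, hd1, hd2⟩ := hmemL e0 (by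
        rw [MvPolynomial.support_monomial, if_neg (one_ne_zero (α := K))]
        exact Finset.mem_singleton_self _)
      have he00 : degP e0 = s := by
        rw [degP_fin2, he0, Finsupp.add_apply, Finsupp.single_eq_same, Finsupp.single_apply,
          if_neg h02.symm, add_zero]
      have he0L : e0 (Fin.last 1) = t' := by
        rw [he0, Finsupp.add_apply, Finsupp.single_apply, if_neg h02, Finsupp.single_eq_same,
          zero_add]
      rw [he00] at hd1
      rw [he0L] at hd2
      have := hno i hi hd1
      omega
    · -- separating weight case : contradiction with the valuation bound
      set w : Fin (m+1) → ℕ := fun i => if i = Fin.last m then mu else lam with hw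
      have hLle : Lideal K m d a ≤ Jid w (lam * s + mu * t' + 1) := by
        rw [Lideal_eq_span, Ideal.span_le]
        rintro - ⟨e, ⟨i, hi, he1, he2⟩, rfl⟩
        intro β hβ
        rw [MvPolynomial.support_monomial, if_neg (one_ne_zero (α := K)),
          Finset.mem_singleton] at hβ
        subst hβ
        rw [hw, wsum_ifweight, he1, he2]
        have hBi := hB i hi
        zify [(by omega : jj ≤ d), hi]
        have hsz : (s : ℤ) = (d : ℤ) - jj := by
          have hsj : s + jj = d := by omega
          push_cast [← hsj]
          ring
        rw [hsz]
        push_cast at hBi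
        linarith [hBi]
      have hfJ := intClo_le_Jid hLle hf
      have hwα := hfJ α hα
      rw [hw, wsum_ifweight, ← hs, ← ht'] at hwα
      exact Nat.not_succ_le_self _ (by linarith [hwα])

end
end
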